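/- Let V be a finite-dimensional vector space with two finite decreasing filtrations F, G that are n-opposed. Setting V^{p,q} = F^p ∩ G^q for p + q = n and V^{p,q} = 0 for p + q ≠ n, the space V is the internal direct sum of the subspaces V^{p,q}, and moreover F^p = ⊕_{p' ≥ p} V^{p', n−p'} and G^q = ⊕_{q' ≥ q} V^{n−q', q'}. -/

import Mathlib

open Submodule

/-- If two finite decreasing exhaustive filtrations `F`, `G` of a finite-dimensional
vector space are `n`-opposed (`Gr_G^q Gr_F^p V = 0` for `p + q ≠ n`), then setting
`V^{p,q} = F^p ⊓ G^q` for `p + q = n` and `V^{p,q} = 0` otherwise, `V` is the internal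
direct sum of the `V^{p,q}`, and `F^p = ⊕_{p' ≥ p} V^{p',n-p'}`,
`G^q = ⊕_{q' ≥ q} V^{n-q',q'}`. -/
theorem opposed_filtrations_bigrading
    {k V : Type*} [Field k] [AddCommGroup V] [Module k V] [FiniteDimensional k V]
    (F G : ℤ → Submodule k V)
    (hF : ∀ p q : ℤ, p ≤ q → F q ≤ F p) (hG : ∀ p q : ℤ, p ≤ q → G q ≤ G p)
    (hFtop : ∃ a : ℤ, F a = ⊤) (hFbot : ∃ b : ℤ, F b = ⊥)
    (hGtop : ∃ a : ℤ, G a = ⊤) (hGbot : ∃ b : ℤ, G b = ⊥)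
    (n : ℤ)
    (hopp : ∀ p q : ℤ, p + q ≠ n →
      Subsingleton (↥(F p ⊓ G q) ⧸
        Submodule.comap (F p ⊓ G q).subtype ((F (p + 1) ⊓ G q) ⊔ (F p ⊓ G (q + 1))))) :
    DirectSum.IsInternal (fun pq : ℤ × ℤ =>
        if pq.1 + pq.2 = n then F pq.1 ⊓ G pq.2 else (⊥ : Submodule k V)) ∧
      (∀ p : ℤ, F p = ⨆ (p' : ℤ) (_ : p ≤ p'), F p' ⊓ G (n - p')) ∧
      (∀ q : ℤ, G q = ⨆ (q' : ℤ) (_ : q ≤ q'), F (n - q') ⊓ G q') := by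
  obtain ⟨aF, haF⟩ := hFtop
  obtain ⟨bF, hbF⟩ := hFbot
  obtain ⟨aG, haG⟩ := hGtop
  obtain ⟨bG, hbG⟩ := hGbot
  have hopp' : ∀ p q : ℤ, p + q ≠ n →
      F p ⊓ G q ≤ (F (p + 1) ⊓ G q) ⊔ (F p ⊓ G (q + 1)) := by
    intro p q h
    have h2 := hopp p q h
    rwa [Submodule.Quotient.subsingleton_iff,
      Submodule.comap_subtype_eq_top] at h2
  have hFb : ∀ p, bF ≤ p → F p = ⊥ := fun p hp => le_bot_iff.mp (hbF ▸ hF bF p hp)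
  have hGb : ∀ q, bG ≤ q → G q = ⊥ := fun q hq => le_bot_iff.mp (hbG ▸ hG bG q hq)
  have hFa : ∀ p, p ≤ aF → F p = ⊤ := fun p hp => top_le_iff.mp (haF ▸ hF p aF hp)
  have hGa : ∀ q, q ≤ aG → G q = ⊤ := fun q hq => top_le_iff.mp (haG ▸ hG q aG hq)
  -- vanishing above the antidiagonal
  have L1 : ∀ p q : ℤ, n < p + q → F p ⊓ G q = ⊥ := by
    have key : ∀ m : ℕ, ∀ p q : ℤ, (bF - p).toNat + (bG - q).toNat ≤ m →
        n < p + q → F p ⊓ G q = ⊥ := by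
      intro m
      induction m with
      | zero =>
        intro p q hm _
        have hp : bF ≤ p := by omega
        simp [hFb p hp]
      | succ m ih =>
        intro p q hm hn
        by_cases hp : bF ≤ p
        · simp [hFb p hp]
        by_cases hq : bG ≤ q
        · simp [hGb q hq]
        have h1 : F (p + 1) ⊓ G q = ⊥ := ih (p + 1) q (by omega) (by omega)
        have h2 : F p ⊓ G (q + 1) = ⊥ := ih p (q + 1) (by omega) (by omega)
        have h3 := hopp' p q (by omega)
        rw [h1, h2] at h3
        exact le_bot_iff.mp (by simpa using h3)
    intro p q hn
    exact key _ p q le_rfl hn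
  -- decomposition of F p ⊓ G q as a sum of diagonal pieces
  have C : ∀ m : ℕ, ∀ p q : ℤ, p + q + m = n →
      F p ⊓ G q ≤ ⨆ (p' : ℤ) (_ : p ≤ p') (_ : q ≤ n - p'), F p' ⊓ G (n - p') := by
    intro m
    induction m with
    | zero =>
      intro p q h
      have hq : G q = G (n - p) := by rw [show q = n - p by omega]
      rw [hq]
      exact le_iSup_of_le p (le_iSup_of_le le_rfl (le_iSup_of_le (by omega) le_rfl))
    | succ m ih =>
      intro p q h
      refine (hopp' p q (by omega)).trans (sup_le ?_ ?_)
      · refine (ih (p + 1) q (by omega)).trans ?_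
        refine iSup_le fun p' => iSup_le fun h1 => iSup_le fun h2 => ?_
        exact le_iSup_of_le p' (le_iSup_of_le (by omega) (le_iSup_of_le h2 le_rfl))
      · refine (ih p (q + 1) (by omega)).trans ?_
        refine iSup_le fun p' => iSup_le fun h1 => iSup_le fun h2 => ?_
        exact le_iSup_of_le p' (le_iSup_of_le h1 (le_iSup_of_le (by omega) le_rfl))
  have part2 : ∀ p : ℤ, F p = ⨆ (p' : ℤ) (_ : p ≤ p'), F p' ⊓ G (n - p') := by
    intro p
    apply le_antisymm
    · have hq : G (min aG (n - p)) = ⊤ := hGa _ (min_le_left _ _)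
      have h1 : F p = F p ⊓ G (min aG (n - p)) := by rw [hq, inf_top_eq]
      rw [h1]
      refine (C (n - (p + min aG (n - p))).toNat p _ (by omega)).trans ?_
      refine iSup_le fun p' => iSup_le fun h1 => iSup_le fun _ => ?_
      exact le_iSup_of_le p' (le_iSup_of_le h1 le_rfl)
    · exact iSup_le fun p' => iSup_le fun h1 => inf_le_left.trans (hF p p' h1)
  have part3 : ∀ q : ℤ, G q = ⨆ (q' : ℤ) (_ : q ≤ q'), F (n - q') ⊓ G q' := by
    intro q
    apply le_antisymm
    · have hp : F (min aF (n - q)) = ⊤ := hFa _ (min_le_left _ _)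
      have h1 : G q = F (min aF (n - q)) ⊓ G q := by rw [hp, top_inf_eq]
      rw [h1]
      refine (C (n - (min aF (n - q) + q)).toNat _ q (by omega)).trans ?_
      refine iSup_le fun p' => iSup_le fun h1 => iSup_le fun h2 => ?_
      refine le_iSup_of_le (n - p') (le_iSup_of_le (by omega) ?_)
      rw [show n - (n - p') = p' by omega]
    · exact iSup_le fun q' => iSup_le fun h1 => inf_le_right.trans (hG q q' h1)
  refine ⟨?_, part2, part3⟩
  rw [DirectSum.isInternal_submodule_iff_iSupIndep_and_iSup_eq_top]
  constructor
  · intro pq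
    obtain ⟨p, q⟩ := pq
    by_cases hpq : p + q = n
    · simp only [if_pos hpq]
      have hB : (⨆ (j : ℤ × ℤ) (_ : j ≠ (p, q)),
          if j.1 + j.2 = n then F j.1 ⊓ G j.2 else (⊥ : Submodule k V))
          ≤ F (p + 1) ⊔ G (q + 1) := by
        refine iSup_le fun j => iSup_le fun hj => ?_
        by_cases hjn : j.1 + j.2 = n
        · rw [if_pos hjn]
          rcases lt_or_gt_of_ne (fun h : j.1 = p => hj (Prod.ext h (by omega))) with h | h
          · exact le_sup_of_le_right (inf_le_right.trans (hG (q + 1) j.2 (by omega)))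
          · exact le_sup_of_le_left (inf_le_left.trans (hF (p + 1) j.1 (by omega)))
        · rw [if_neg hjn]; exact bot_le
      refine Disjoint.mono_right hB ?_
      rw [disjoint_def]
      intro x hx hx2
      obtain ⟨r, hr, l, hl, hrl⟩ := mem_sup.mp hx2
      have hrG : r ∈ G q := by
        rw [show r = x - l by rw [← hrl]; abel]
        exact sub_mem hx.2 (hG q (q + 1) (by omega) hl)
      have hr0 : r = 0 := by
        have hmem : r ∈ F (p + 1) ⊓ G q := ⟨hr, hrG⟩
        rwa [L1 (p + 1) q (by omega), Submodule.mem_bot] at hmem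
      have hxl : x = l := by rw [← hrl, hr0, zero_add]
      have hmem : x ∈ F p ⊓ G (q + 1) := ⟨hx.1, hxl ▸ hl⟩
      rwa [L1 p (q + 1) (by omega), Submodule.mem_bot] at hmem
    · simp only [if_neg hpq]
      exact disjoint_bot_left
  · refine le_antisymm le_top ?_
    rw [← haF, part2 aF]
    refine iSup_le fun p' => iSup_le fun _ => ?_
    refine le_iSup_of_le (p', n - p') ?_
    simp only []
    rw [if_pos (by omega : p' + (n - p') = n)]
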